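/- For every γ > 0 there exists N₀ such that for all integers N ≥ N₀, every x ∈ ℤ_N, and every integer n with n ≥ 10γ N log N, the simple random walk on the cylinder ℤ_N × ℤ started at (x, 0) satisfies P(τ^y_n < 3γ N² log N) ≤ N^{−γ}. -/

import Mathlib

open MeasureTheory ProbabilityTheory Real

namespace Stmt0Aux

variable {Ω : Type} [MeasurableSpace Ω] {P : Measure Ω}

lemma identDistrib_add [IsProbabilityMeasure P] {U V U' V' : Ω → ℤ}
    (hU : Measurable U) (hV : Measurable V) (hU' : Measurable U') (hV' : Measurable V')
    (hUV : IndepFun U V P) (hUV' : IndepFun U' V' P)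
    (hUU' : IdentDistrib U U' P P) (hVV' : IdentDistrib V V' P P) :
    IdentDistrib (fun ω => U ω + V ω) (fun ω => U' ω + V' ω) P P := by
  have h1 : P.map (fun ω => (U ω, V ω)) = (P.map U).prod (P.map V) :=
    (indepFun_iff_map_prod_eq_prod_map_map hU.aemeasurable hV.aemeasurable).1 hUV
  have h2 : P.map (fun ω => (U' ω, V' ω)) = (P.map U').prod (P.map V') :=
    (indepFun_iff_map_prod_eq_prod_map_map hU'.aemeasurable hV'.aemeasurable).1 hUV'
  have hpair : IdentDistrib (fun ω => (U ω, V ω)) (fun ω => (U' ω, V' ω)) P P :=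
    ⟨(hU.prodMk hV).aemeasurable, (hU'.prodMk hV').aemeasurable, by
      rw [h1, h2, hUU'.map_eq, hVV'.map_eq]⟩
  exact hpair.comp (measurable_fst.add measurable_snd)

lemma sum_neg_identDistrib [IsProbabilityMeasure P] (Y : ℕ → Ω → ℤ)
    (hmeas : ∀ i, Measurable (Y i))
    (hindep : iIndepFun Y P)
    (hsymm : ∀ i, IdentDistrib (Y i) (fun ω => -(Y i ω)) P P)
    (s : Finset ℕ) :
    IdentDistrib (fun ω => ∑ i ∈ s, Y i ω) (fun ω => -∑ i ∈ s, Y i ω) P P := by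
  classical
  induction s using Finset.induction_on with
  | empty => simpa using IdentDistrib.refl (aemeasurable_const (b := (0:ℤ)))
  | @insert j s hjs ih =>
      have hsum_meas : Measurable (fun ω => ∑ i ∈ s, Y i ω) :=
        Finset.measurable_sum s (fun i _ => hmeas i)
      have hind : IndepFun (Y j) (fun ω => ∑ i ∈ s, Y i ω) P := by
        have h := (hindep.indepFun_finsetSum_of_notMem hmeas hjs).symm
        have heq : (∑ i ∈ s, Y i) = fun ω => ∑ i ∈ s, Y i ω := by
          funext ω; simp [Finset.sum_apply]
        rwa [heq] at h
      have hindn : IndepFun (fun ω => -(Y j ω)) (fun ω => -∑ i ∈ s, Y i ω) P :=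
        hind.comp measurable_neg measurable_neg
      have h := identDistrib_add (U' := fun ω => -(Y j ω)) (V' := fun ω => -∑ i ∈ s, Y i ω) (hmeas j) hsum_meas (hmeas j).neg hsum_meas.neg
        hind hindn (hsymm j) ih
      have e1 : (fun ω => Y j ω + ∑ i ∈ s, Y i ω) = fun ω => ∑ i ∈ insert j s, Y i ω := by
        funext ω; rw [Finset.sum_insert hjs]
      have e2 : (fun ω => -(Y j ω) + -∑ i ∈ s, Y i ω) = fun ω => -∑ i ∈ insert j s, Y i ω := by
        funext ω; rw [Finset.sum_insert hjs, neg_add]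
      rwa [e1, e2] at h

lemma half_le_prob_nonneg [IsProbabilityMeasure P] {Z : Ω → ℤ} (hZ : Measurable Z)
    (h : IdentDistrib Z (fun ω => -Z ω) P P) :
    1 ≤ 2 * P {ω | 0 ≤ Z ω} := by
  have hs : MeasurableSet {x : ℤ | 0 ≤ x} := .of_discrete
  have e1 : P {ω | 0 ≤ Z ω} = P {ω | Z ω ≤ 0} := by
    calc P {ω | 0 ≤ Z ω} = P.map Z {x | 0 ≤ x} := by
          rw [Measure.map_apply hZ hs]; rfl
      _ = P.map (fun ω => -Z ω) {x | 0 ≤ x} := by rw [h.map_eq]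
      _ = P {ω | Z ω ≤ 0} := by
          rw [Measure.map_apply (show Measurable fun ω => -Z ω from hZ.neg) hs]
          congr 1; ext ω; simp
  have cover : (Set.univ : Set Ω) ⊆ {ω | 0 ≤ Z ω} ∪ {ω | Z ω ≤ 0} := by
    intro ω _; rcases le_total 0 (Z ω) with h'|h' <;> simp [h']
  calc (1:ENNReal) = P Set.univ := measure_univ.symm
    _ ≤ P ({ω | 0 ≤ Z ω} ∪ {ω | Z ω ≤ 0}) := measure_mono cover
    _ ≤ P {ω | 0 ≤ Z ω} + P {ω | Z ω ≤ 0} := measure_union_le _ _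
    _ = 2 * P {ω | 0 ≤ Z ω} := by rw [← e1, two_mul]

end Stmt0Aux



namespace Stmt0Aux2

variable {Ω : Type} [MeasurableSpace Ω] {P : Measure Ω}

noncomputable def m₀ : Measure (ℤ × ℤ) :=
  (4:ENNReal)⁻¹ • (Measure.dirac (1,0) + Measure.dirac (-1,0)
    + Measure.dirac (0,1) + Measure.dirac (0,-1))

lemma map_eq_m₀ [IsProbabilityMeasure P] {X : Ω → ℤ × ℤ} (hX : Measurable X)
    (h : ∀ s ∈ ({(1, 0), (-1, 0), (0, 1), (0, -1)} : Set (ℤ × ℤ)),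
        P {ω | X ω = s} = 1 / 4) :
    P.map X = m₀ := by
  have h1 := h (1,0) (by norm_num)
  have h2 := h (-1,0) (by norm_num)
  have h3 := h (0,1) (by norm_num)
  have h4 := h (0,-1) (by norm_num)
  apply MeasureTheory.Measure.ext_of_singleton
  intro a
  rw [Measure.map_apply hX .of_discrete]
  have hpre : ∀ v : ℤ × ℤ, X ⁻¹' {v} = {ω | X ω = v} := fun v => rfl
  by_cases ha : a = (1,0) ∨ a = (-1,0) ∨ a = (0,1) ∨ a = (0,-1)
  · rcases ha with h'|h'|h'|h' <;> subst h' <;>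
      simp only [hpre, h1, h2, h3, h4, m₀, Measure.smul_apply, Measure.add_apply,
        Measure.dirac_apply' _ (MeasurableSet.of_discrete), Set.indicator] <;>
      norm_num
  · push_neg at ha
    obtain ⟨ha1, ha2, ha3, ha4⟩ := ha
    have key : P (X ⁻¹' {a}) = 0 := by
      classical
      set F : Finset (ℤ × ℤ) := {(1,0), (-1,0), (0,1), (0,-1)} with hF
      have haF : a ∉ F := by simp [hF, ha1, ha2, ha3, ha4]
      have hdisj : (↑(insert a F) : Set (ℤ × ℤ)).PairwiseDisjoint
          (fun v => X ⁻¹' {v}) := by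
        intro u _ v _ huv
        refine Set.disjoint_left.2 fun ω hu hv => huv ?_
        have : X ω = u := hu
        have : X ω = v := hv
        simp_all
      have hsum : P (⋃ v ∈ insert a F, X ⁻¹' {v})
          = ∑ v ∈ insert a F, P (X ⁻¹' {v}) :=
        measure_biUnion_finset hdisj (fun v _ => hX .of_discrete)
      have hFsum : ∑ v ∈ F, P (X ⁻¹' {v}) = 1 := by
        rw [hF]
        rw [Finset.sum_insert (by decide), Finset.sum_insert (by decide),
          Finset.sum_insert (by decide), Finset.sum_singleton]
        simp only [hpre, h1, h2, h3, h4]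
        rw [ENNReal.div_add_div_same, ENNReal.div_add_div_same, ENNReal.div_add_div_same]
        rw [show (1+(1+(1+1)) : ENNReal) = 4 by norm_num]
        exact ENNReal.div_self (by norm_num) (by norm_num)
      have hle : P (X ⁻¹' {a}) + 1 ≤ 1 := by
        calc P (X ⁻¹' {a}) + 1
            = ∑ v ∈ insert a F, P (X ⁻¹' {v}) := by
              rw [Finset.sum_insert haF, hFsum]
          _ = P (⋃ v ∈ insert a F, X ⁻¹' {v}) := hsum.symm
          _ ≤ 1 := prob_le_one
      have h0 : P (X ⁻¹' {a}) + 1 ≤ 0 + 1 := by simpa using hle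
      have := (ENNReal.add_le_add_iff_right (by norm_num : (1:ENNReal) ≠ ⊤)).1 h0
      simpa using this
    rw [key]
    simp only [m₀, Measure.smul_apply, Measure.add_apply,
      Measure.dirac_apply' _ (MeasurableSet.of_discrete), Set.indicator]
    have : ∀ v : ℤ × ℤ, v ≠ a → ((1,0) = v → False) → True := fun _ _ _ => trivial
    simp [Set.mem_singleton_iff, Ne.symm ha1, Ne.symm ha2, Ne.symm ha3, Ne.symm ha4]

lemma snd_identDistrib_neg [IsProbabilityMeasure P] {X : Ω → ℤ × ℤ} (hX : Measurable X)
    (h : ∀ s ∈ ({(1, 0), (-1, 0), (0, 1), (0, -1)} : Set (ℤ × ℤ)),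
        P {ω | X ω = s} = 1 / 4) :
    IdentDistrib (fun ω => (X ω).2) (fun ω => -(X ω).2) P P := by
  have hmap := map_eq_m₀ hX h
  have hm1 : Measurable (fun p : ℤ × ℤ => p.2) := .of_discrete
  have hm2 : Measurable (fun p : ℤ × ℤ => -p.2) := .of_discrete
  refine ⟨(hm1.comp hX).aemeasurable, (hm2.comp hX).aemeasurable, ?_⟩
  have e1 : (fun ω => (X ω).2) = (fun p : ℤ × ℤ => p.2) ∘ X := rfl
  have e2 : (fun ω => -(X ω).2) = (fun p : ℤ × ℤ => -p.2) ∘ X := rfl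
  rw [e1, e2, ← Measure.map_map hm1 hX, ← Measure.map_map hm2 hX, hmap]
  rw [m₀, Measure.map_smul, Measure.map_smul]
  congr 1
  rw [Measure.map_add _ _ hm1, Measure.map_add _ _ hm1, Measure.map_add _ _ hm1,
    Measure.map_add _ _ hm2, Measure.map_add _ _ hm2, Measure.map_add _ _ hm2,
    Measure.map_dirac' hm1, Measure.map_dirac' hm1, Measure.map_dirac' hm1, Measure.map_dirac' hm1,
    Measure.map_dirac' hm2, Measure.map_dirac' hm2, Measure.map_dirac' hm2, Measure.map_dirac' hm2]
  norm_num
  abel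

lemma ae_mem_four [IsProbabilityMeasure P] {X : Ω → ℤ × ℤ} (hX : Measurable X)
    (h : ∀ s ∈ ({(1, 0), (-1, 0), (0, 1), (0, -1)} : Set (ℤ × ℤ)),
        P {ω | X ω = s} = 1 / 4) :
    ∀ᵐ ω ∂P, |(X ω).2| ≤ 1 := by
  have hmap := map_eq_m₀ hX h
  have hset : MeasurableSet {p : ℤ × ℤ | |p.2| ≤ 1} := .of_discrete
  have h0 : P.map X {p : ℤ × ℤ | |p.2| ≤ 1}ᶜ = 0 := by
    rw [hmap]
    simp only [m₀, Measure.smul_apply, Measure.add_apply,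
      Measure.dirac_apply' _ hset.compl, Set.indicator]
    norm_num
  rw [Measure.map_apply hX hset.compl] at h0
  exact (ae_iff).2 (by simpa [Set.preimage, Set.compl_setOf] using h0)

lemma integrable_dirac_fun (f : ℤ × ℤ → ℝ) (a : ℤ × ℤ) : Integrable f (Measure.dirac a) := by
  have hf : StronglyMeasurable f := (Measurable.of_discrete (f := f)).stronglyMeasurable
  refine ⟨hf.aestronglyMeasurable, ?_⟩
  rw [HasFiniteIntegral, lintegral_dirac' _ hf.measurable.enorm]
  exact ENNReal.coe_lt_top

lemma mgf_step [IsProbabilityMeasure P] {X : Ω → ℤ × ℤ} (hX : Measurable X)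
    (h : ∀ s ∈ ({(1, 0), (-1, 0), (0, 1), (0, -1)} : Set (ℤ × ℤ)),
        P {ω | X ω = s} = 1 / 4) (l : ℝ) :
    mgf (fun ω => ((X ω).2 : ℝ)) P l ≤ exp (l ^ 2 / 2) := by
  have hmap := map_eq_m₀ hX h
  have hfm : Measurable (fun p : ℤ × ℤ => exp (l * (p.2 : ℝ))) := .of_discrete
  have key : mgf (fun ω => ((X ω).2 : ℝ)) P l
      = ∫ p : ℤ × ℤ, exp (l * (p.2 : ℝ)) ∂(P.map X) := by
    rw [mgf, integral_map hX.aemeasurable hfm.aestronglyMeasurable]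
  rw [key, hmap]
  have hval : ∫ p : ℤ × ℤ, exp (l * (p.2 : ℝ)) ∂m₀
      = (4:ℝ)⁻¹ * (exp 0 + exp 0 + exp l + exp (-l)) := by
    have hd := integrable_dirac_fun (fun p : ℤ × ℤ => exp (l * (p.2 : ℝ)))
    rw [m₀, integral_smul_measure]
    rw [integral_add_measure (((hd _).add_measure (hd _)).add_measure (hd _)) (hd _),
      integral_add_measure ((hd _).add_measure (hd _)) (hd _),
      integral_add_measure (hd _) (hd _)]
    rw [integral_dirac, integral_dirac, integral_dirac, integral_dirac]
    norm_num [ENNReal.toReal_inv]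
  rw [hval]
  have hcosh : cosh l = (exp l + exp (-l)) / 2 := Real.cosh_eq l
  have hch := Real.cosh_le_exp_half_sq l
  have h1 : (1:ℝ) ≤ exp (l ^ 2 / 2) := by
    rw [show (1:ℝ) = exp 0 by simp]
    exact exp_le_exp.2 (by positivity)
  rw [Real.exp_zero]
  linarith

end Stmt0Aux2


/-- For every `γ > 0` there exists `N₀` such that for all integers `N ≥ N₀`, every `x ∈ ℤ_N`,
and every integer `n` with `n ≥ 10 γ N log N`, the simple random walk on the cylinder
`ℤ_N × ℤ` started at `(x, 0)` satisfies `P(τ^y_n < 3 γ N² log N) ≤ N^{-γ}`.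

The walk is modelled by i.i.d. steps `X i : Ω → ℤ × ℤ`, uniform on the four unit steps
`{(1,0), (-1,0), (0,1), (0,-1)}`; the cylinder position at time `t` is
`(x + (Σ steps).1 mod N, (Σ steps).2)`.  The event `τ^y_n < T` is expressed as the existence
of a time `t < T` at which the vertical coordinate equals `n`. -/
theorem stmt0 (γ : ℝ) (hγ : 0 < γ) :
    ∃ N₀ : ℕ, ∀ N : ℕ, N₀ ≤ N →
    ∀ (Ω : Type) (_ : MeasurableSpace Ω) (P : Measure Ω), IsProbabilityMeasure P →
    ∀ X : ℕ → Ω → ℤ × ℤ,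
      (∀ i, Measurable (X i)) →
      iIndepFun X P →
      (∀ i, ∀ s ∈ ({(1, 0), (-1, 0), (0, 1), (0, -1)} : Set (ℤ × ℤ)),
        P {ω | X i ω = s} = 1 / 4) →
    ∀ _x : ZMod N, ∀ n : ℤ,
      10 * γ * N * Real.log N ≤ (n : ℝ) →
      P {ω | ∃ t : ℕ, (t : ℝ) < 3 * γ * N ^ 2 * Real.log N ∧
          (∑ i ∈ Finset.range t, X i ω).2 = n}
        ≤ ENNReal.ofReal ((N : ℝ) ^ (-γ)) := by
  classical
  refine ⟨max 3 ⌈Real.exp (1/(3*γ))⌉₊, ?_⟩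
  intro N hN Ω mΩ P hP X hXm hXi hXd _x n hn
  have hN3 : (3:ℕ) ≤ N := le_trans (le_max_left _ _) hN
  have hN0 : (0:ℝ) < N := by
    have : (3:ℝ) ≤ (N:ℝ) := by exact_mod_cast hN3
    linarith
  set L : ℝ := Real.log N with hLdef
  have hL1 : 1 ≤ L := by
    rw [hLdef, Real.le_log_iff_exp_le hN0]
    have h1 : Real.exp 1 < 2.7182818286 := Real.exp_one_lt_d9
    have h2 : (3:ℝ) ≤ (N:ℝ) := by exact_mod_cast hN3
    linarith
  have hLγ : 1/(3*γ) ≤ L := by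
    rw [hLdef, Real.le_log_iff_exp_le hN0]
    calc Real.exp (1/(3*γ)) ≤ (⌈Real.exp (1/(3*γ))⌉₊ : ℝ) := Nat.le_ceil _
      _ ≤ (N:ℝ) := by exact_mod_cast le_trans (le_max_right 3 _) hN
  set R : ℝ := 3 * γ * (N:ℝ) ^ 2 * L with hRdef
  have hR0 : 0 ≤ R := by positivity
  set T : ℕ := ⌈R⌉₊ with hTdef
  set Y : ℕ → Ω → ℤ := fun i ω => (X i ω).2 with hYdef
  set Yr : ℕ → Ω → ℝ := fun i ω => ((X i ω).2 : ℝ) with hYrdef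
  set S : ℕ → Ω → ℤ := fun t ω => ∑ i ∈ Finset.range t, Y i ω with hSdef
  have hYm : ∀ i, Measurable (Y i) :=
    fun i => (Measurable.of_discrete (f := fun p : ℤ × ℤ => p.2)).comp (hXm i)
  have hYrm : ∀ i, Measurable (Yr i) :=
    fun i => (Measurable.of_discrete (f := fun p : ℤ × ℤ => (p.2 : ℝ))).comp (hXm i)
  have hYim : iIndepFun Y P :=
    hXi.comp (fun _ (p : ℤ × ℤ) => p.2) (fun _ => .of_discrete)
  have hYri : iIndepFun Yr P :=
    hXi.comp (fun _ (p : ℤ × ℤ) => (p.2 : ℝ)) (fun _ => .of_discrete)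
  have hSm : ∀ t, Measurable (S t) := fun t => Finset.measurable_sum _ (fun i _ => hYm i)
  have hsymm : ∀ i, IdentDistrib (Y i) (fun ω => -(Y i ω)) P P :=
    fun i => Stmt0Aux2.snd_identDistrib_neg (hXm i) (hXd i)
  have hn0 : (0:ℝ) < (n:ℝ) := by
    have : 0 < 10 * γ * (N:ℝ) * L := by positivity
    linarith
  -- the stopping-time decomposition
  set A : ℕ → Set Ω := fun t => {ω | S t ω = n ∧ ∀ s < t, S s ω ≠ n} with hAdef
  set B : ℕ → Set Ω := fun t => {ω | 0 ≤ ∑ i ∈ Finset.Ico t T, Y i ω} with hBdef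
  set G : Set Ω := {ω | (n:ℝ) ≤ ∑ i ∈ Finset.range T, Yr i ω} with hGdef
  have hsnd : ∀ t (ω : Ω), (∑ i ∈ Finset.range t, X i ω).2 = S t ω := by
    intro t ω
    exact Prod.snd_sum
  have hsub : {ω | ∃ t : ℕ, (t : ℝ) < R ∧ (∑ i ∈ Finset.range t, X i ω).2 = n}
      ⊆ ⋃ t ∈ Finset.range T, A t := by
    rintro ω ⟨t₀, ht₀, hSn⟩
    have hex : ∃ t, S t ω = n := ⟨t₀, by rw [← hsnd]; exact hSn⟩
    have h1 : Nat.find hex ≤ t₀ := Nat.find_min' hex (by rw [← hsnd]; exact hSn)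
    have ht₀T : t₀ < T := Nat.lt_ceil.2 ht₀
    exact Set.mem_biUnion (Finset.mem_range.2 (lt_of_le_of_lt h1 ht₀T))
      ⟨Nat.find_spec hex, fun s hs => Nat.find_min hex hs⟩
  have hAm : ∀ t, MeasurableSet (A t) := by
    intro t
    have h1 : MeasurableSet {ω | S t ω = n} := hSm t (measurableSet_singleton n)
    have h2 : MeasurableSet {ω | ∀ s < t, S s ω ≠ n} := by
      have he : {ω | ∀ s < t, S s ω ≠ n} = ⋂ s ∈ Set.Iio t, {ω | S s ω = n}ᶜ := by
        ext ω; simp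
      rw [he]
      exact MeasurableSet.biInter (Set.to_countable _)
        (fun s _ => (hSm s (measurableSet_singleton n)).compl)
    exact h1.inter h2
  have hBm : ∀ t, MeasurableSet (B t) := by
    intro t
    have hzm : Measurable (fun ω => ∑ i ∈ Finset.Ico t T, Y i ω) :=
      Finset.measurable_sum _ (fun i _ => hYm i)
    exact hzm measurableSet_Ici
  have hAdisj : (↑(Finset.range T) : Set ℕ).PairwiseDisjoint A := by
    intro u _ v _ huv
    refine Set.disjoint_left.2 fun ω hu hv => ?_
    rcases lt_or_gt_of_ne huv with h | h
    · exact hv.2 u h hu.1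
    · exact hu.2 v h hv.1
  -- independence of `A t` and `B t`
  have hkey : ∀ t, P (A t ∩ B t) = P (A t) * P (B t) := by
    intro t
    have hdisjF : Disjoint (Finset.range t) (Finset.Ico t T) := by
      rw [Finset.disjoint_left]
      intro j hj hj'
      rw [Finset.mem_range] at hj
      rw [Finset.mem_Ico] at hj'
      omega
    have hind := hXi.indepFun_finset (Finset.range t) (Finset.Ico t T) hdisjF hXm
    have hg : ∀ s, s ≤ t → ∀ ω : Ω,
        (∑ j : ↥(Finset.range t), if (j:ℕ) < s then (X (j:ℕ) ω).2 else 0)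
          = ∑ i ∈ Finset.range s, Y i ω := by
      intro s hs ω
      rw [Finset.sum_coe_sort (Finset.range t)
        (fun j => if j < s then (X j ω).2 else 0), ← Finset.sum_filter]
      have hfil : (Finset.range t).filter (· < s) = Finset.range s := by
        ext j
        simp only [Finset.mem_filter, Finset.mem_range]
        omega
      rw [hfil]
    have hg2 : ∀ ω : Ω,
        (∑ j : ↥(Finset.Ico t T), (X (j:ℕ) ω).2)
          = ∑ i ∈ Finset.Ico t T, Y i ω :=
      fun ω => Finset.sum_coe_sort (Finset.Ico t T) (fun j => (X j ω).2)
    set M₁ : Set (↥(Finset.range t) → ℤ × ℤ) :=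
      {v | (∑ j : ↥(Finset.range t), if (j:ℕ) < t then (v j).2 else 0) = n ∧
           ∀ s < t, (∑ j : ↥(Finset.range t), if (j:ℕ) < s then (v j).2 else 0) ≠ n} with hM₁
    set M₂ : Set (↥(Finset.Ico t T) → ℤ × ℤ) :=
      {w | 0 ≤ ∑ j : ↥(Finset.Ico t T), (w j).2} with hM₂
    have hA_eq : A t = (fun a (i : ↥(Finset.range t)) => X (i:ℕ) a) ⁻¹' M₁ := by
      ext ω
      show (S t ω = n ∧ ∀ s < t, S s ω ≠ n) ↔ _
      simp only [Set.mem_preimage, Set.mem_setOf_eq, hM₁]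
      constructor
      · rintro ⟨h1, h2⟩
        exact ⟨by rw [hg t le_rfl ω]; exact h1,
          fun s hs => by rw [hg s hs.le ω]; exact h2 s hs⟩
      · rintro ⟨h1, h2⟩
        rw [hg t le_rfl ω] at h1
        exact ⟨h1, fun s hs => by have := h2 s hs; rwa [hg s hs.le ω] at this⟩
    have hB_eq : B t = (fun a (i : ↥(Finset.Ico t T)) => X (i:ℕ) a) ⁻¹' M₂ := by
      ext ω
      show (0 ≤ ∑ i ∈ Finset.Ico t T, Y i ω) ↔ _
      simp only [Set.mem_preimage, Set.mem_setOf_eq, hM₂]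
      rw [← hg2 ω]
    rw [hA_eq, hB_eq]
    exact (indepFun_iff_measure_inter_preimage_eq_mul.1 hind) M₁ M₂ .of_discrete .of_discrete
  -- P(B t) ≥ 1/2
  have hB_half : ∀ t, 1 ≤ 2 * P (B t) := by
    intro t
    have hzm : Measurable (fun ω => ∑ i ∈ Finset.Ico t T, Y i ω) :=
      Finset.measurable_sum _ (fun i _ => hYm i)
    exact Stmt0Aux.half_le_prob_nonneg hzm
      (Stmt0Aux.sum_neg_identDistrib Y hYm hYim hsymm (Finset.Ico t T))
  -- ⋃ (A t ∩ B t) ⊆ G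
  have hABG : (⋃ t ∈ Finset.range T, (A t ∩ B t)) ⊆ G := by
    intro ω hω
    rw [Set.mem_iUnion₂] at hω
    obtain ⟨t, ht, hA', hB'⟩ := hω
    rw [Finset.mem_range] at ht
    have hsplit : S t ω + ∑ i ∈ Finset.Ico t T, Y i ω = S T ω := by
      show (∑ i ∈ Finset.range t, Y i ω) + (∑ i ∈ Finset.Ico t T, Y i ω)
          = ∑ i ∈ Finset.range T, Y i ω
      rw [Finset.range_eq_Ico, Finset.range_eq_Ico]
      exact Finset.sum_Ico_consecutive (fun i => Y i ω) (Nat.zero_le t) ht.le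
    have hZn : n ≤ S T ω := by
      have h0 : (0:ℤ) ≤ ∑ i ∈ Finset.Ico t T, Y i ω := hB'
      have h1 : S t ω = n := hA'.1
      omega
    have hcast : ((S T ω : ℤ) : ℝ) = ∑ i ∈ Finset.range T, Yr i ω := by
      show ((∑ i ∈ Finset.range T, Y i ω : ℤ) : ℝ) = ∑ i ∈ Finset.range T, Yr i ω
      push_cast
      rfl
    show (n:ℝ) ≤ ∑ i ∈ Finset.range T, Yr i ω
    rw [← hcast]
    exact_mod_cast hZn
  -- reflection: P(event) ≤ 2 P(G)
  have main : P {ω | ∃ t : ℕ, (t : ℝ) < R ∧ (∑ i ∈ Finset.range t, X i ω).2 = n}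
      ≤ 2 * P G := by
    have hABdisj : (↑(Finset.range T) : Set ℕ).PairwiseDisjoint (fun t => A t ∩ B t) :=
      fun u hu v hv huv =>
        ((hAdisj hu hv huv).mono Set.inter_subset_left Set.inter_subset_left)
    calc P {ω | ∃ t : ℕ, (t : ℝ) < R ∧ (∑ i ∈ Finset.range t, X i ω).2 = n}
        ≤ P (⋃ t ∈ Finset.range T, A t) := measure_mono hsub
      _ ≤ ∑ t ∈ Finset.range T, P (A t) := measure_biUnion_finset_le _ _
      _ ≤ ∑ t ∈ Finset.range T, 2 * P (A t ∩ B t) := by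
          refine Finset.sum_le_sum fun t _ => ?_
          calc P (A t) = P (A t) * 1 := (mul_one _).symm
            _ ≤ P (A t) * (2 * P (B t)) := mul_le_mul_right (hB_half t) _
            _ = 2 * (P (A t) * P (B t)) := by ring
            _ = 2 * P (A t ∩ B t) := by rw [hkey t]
      _ = 2 * ∑ t ∈ Finset.range T, P (A t ∩ B t) := by rw [Finset.mul_sum]
      _ = 2 * P (⋃ t ∈ Finset.range T, (A t ∩ B t)) := by
          rw [measure_biUnion_finset hABdisj (fun t _ => (hAm t).inter (hBm t))]
      _ ≤ 2 * P G := mul_le_mul_right (measure_mono hABG) 2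
  -- Chernoff bound on P(G)
  set lam : ℝ := 1/(N:ℝ) with hlamdef
  have hlam0 : 0 ≤ lam := by positivity
  set V : Ω → ℝ := fun ω => ∑ i ∈ Finset.range T, Yr i ω with hVdef
  have hVm : Measurable V := Finset.measurable_sum _ (fun i _ => hYrm i)
  have hbnd : ∀ᵐ ω ∂P, ∀ i, |Yr i ω| ≤ 1 := by
    rw [ae_all_iff]
    intro i
    filter_upwards [Stmt0Aux2.ae_mem_four (hXm i) (hXd i)] with ω h
    have : Yr i ω = ((X i ω).2 : ℝ) := rfl
    rw [this]
    exact_mod_cast h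
  have hVb : ∀ᵐ ω ∂P, ‖Real.exp (lam * V ω)‖ ≤ Real.exp (lam * T) := by
    filter_upwards [hbnd] with ω h
    rw [Real.norm_eq_abs, Real.abs_exp]
    refine Real.exp_le_exp.2 (mul_le_mul_of_nonneg_left ?_ hlam0)
    calc V ω ≤ |V ω| := le_abs_self _
      _ ≤ ∑ i ∈ Finset.range T, |Yr i ω| := Finset.abs_sum_le_sum_abs _ _
      _ ≤ ∑ _i ∈ Finset.range T, (1:ℝ) := Finset.sum_le_sum (fun i _ => h i)
      _ = T := by rw [Finset.sum_const, Finset.card_range]; simp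
  have hint : Integrable (fun ω => Real.exp (lam * V ω)) P :=
    Integrable.mono' (integrable_const (Real.exp (lam * T)))
      ((hVm.const_mul lam).exp.aestronglyMeasurable) hVb
  have hcher : (P G).toReal ≤ Real.exp (-lam * (n:ℝ)) * mgf V P lam :=
    measure_ge_le_exp_mul_mgf (n:ℝ) hlam0 hint
  have hmgf : mgf V P lam ≤ Real.exp (T * (lam^2/2)) := by
    have hsum_eq : V = ∑ i ∈ Finset.range T, Yr i := by
      funext ω; show ∑ i ∈ Finset.range T, Yr i ω = _; simp [Finset.sum_apply]
    rw [hsum_eq, hYri.mgf_sum hYrm]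
    calc ∏ i ∈ Finset.range T, mgf (Yr i) P lam
        ≤ ∏ _i ∈ Finset.range T, Real.exp (lam^2/2) :=
          Finset.prod_le_prod (fun i _ => mgf_nonneg)
            (fun i _ => Stmt0Aux2.mgf_step (hXm i) (hXd i) lam)
      _ = Real.exp (lam^2/2) ^ T := by rw [Finset.prod_const, Finset.card_range]
      _ = Real.exp (T * (lam^2/2)) := by rw [← Real.exp_nat_mul]
  have hG : P G ≤ ENNReal.ofReal (Real.exp (T*(lam^2/2) - lam*(n:ℝ))) := by
    rw [ENNReal.le_ofReal_iff_toReal_le (measure_ne_top _ _) (Real.exp_pos _).le]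
    calc (P G).toReal ≤ Real.exp (-lam * (n:ℝ)) * mgf V P lam := hcher
      _ ≤ Real.exp (-lam * (n:ℝ)) * Real.exp (T * (lam^2/2)) :=
          mul_le_mul_of_nonneg_left hmgf (Real.exp_pos _).le
      _ = Real.exp (T*(lam^2/2) - lam*(n:ℝ)) := by rw [← Real.exp_add]; ring_nf
  -- final numeric estimate
  have hfinal : 2 * Real.exp (T*(lam^2/2) - lam*(n:ℝ)) ≤ (N:ℝ)^(-γ) := by
    have hT : (T:ℝ) < R + 1 := Nat.ceil_lt_add_one hR0
    have hc2 : (0:ℝ) < (N:ℝ)^2 := by positivity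
    have hlamsq : lam^2/2 = 1/(2*(N:ℝ)^2) := by rw [hlamdef]; field_simp
    have hTb : (T:ℝ) * (lam^2/2) ≤ 3*γ*L/2 + 1 := by
      have h1 : (T:ℝ) * (lam^2/2) ≤ (R + 1) * (lam^2/2) := by
        apply mul_le_mul_of_nonneg_right hT.le
        rw [hlamsq]; positivity
      have h2 : (R + 1) * (lam^2/2) = 3*γ*L/2 + 1/(2*(N:ℝ)^2) := by
        rw [hlamsq, hRdef]; field_simp
      have h3 : 1/(2*(N:ℝ)^2) ≤ 1 := by
        rw [div_le_one (by positivity)]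
        have h4 : (3:ℝ) ≤ (N:ℝ) := by exact_mod_cast hN3
        nlinarith [h4]
      linarith
    have hln : 10*γ*L ≤ lam * (n:ℝ) := by
      have h1 : lam * (10 * γ * (N:ℝ) * L) ≤ lam * (n:ℝ) :=
        mul_le_mul_of_nonneg_left hn hlam0
      have h2 : lam * (10 * γ * (N:ℝ) * L) = 10*γ*L := by
        rw [hlamdef]; field_simp
      linarith
    have hγL : 1/3 ≤ γ * L := by
      have h1 : γ * (1/(3*γ)) ≤ γ * L := mul_le_mul_of_nonneg_left hLγ hγ.le
      have h2 : γ * (1/(3*γ)) = 1/3 := by field_simp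
      linarith
    have hlog2 : Real.log 2 < 1 := by
      have := Real.log_two_lt_d9
      linarith
    rw [Real.rpow_def_of_pos hN0, ← hLdef]
    rw [show (2:ℝ) * Real.exp (T*(lam^2/2) - lam*(n:ℝ))
      = Real.exp (Real.log 2 + (T*(lam^2/2) - lam*(n:ℝ))) by
        rw [Real.exp_add, Real.exp_log two_pos]]
    apply Real.exp_le_exp.2
    nlinarith [hTb, hln, hγL, hlog2]
  calc P {ω | ∃ t : ℕ, (t : ℝ) < R ∧ (∑ i ∈ Finset.range t, X i ω).2 = n}
      ≤ 2 * P G := main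
    _ ≤ 2 * ENNReal.ofReal (Real.exp (T*(lam^2/2) - lam*(n:ℝ))) :=
        mul_le_mul_right hG 2
    _ = ENNReal.ofReal (2 * Real.exp (T*(lam^2/2) - lam*(n:ℝ))) := by
        rw [ENNReal.ofReal_mul (by norm_num : (0:ℝ) ≤ 2)]
        norm_num
    _ ≤ ENNReal.ofReal ((N:ℝ)^(-γ)) := ENNReal.ofReal_le_ofReal hfinal
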